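/- Let A ⊆ [0,1)^{d'} and B ⊆ [0,1)^{d''} be measurable, (x_1,...,x_N) random points in [0,1)^{d'} and (y_1,...,y_N) random points in [0,1)^{d''}, mutually independent as families. If the binary random variables 1_A(x_i), i=1,...,N, are upper negatively α-dependent and 1_B(y_i), i=1,...,N, are upper negatively β-dependent, then the binary random variables 1_{A×B}(x_i,y_i), i=1,...,N, are upper negatively αβ-dependent. -/

import Mathlib

open MeasureTheory ProbabilityTheory
open scoped ENNReal

/-- Concatenating two mutually independent families whose indicators are upper negatively
α- resp. β-dependent yields indicators that are upper negatively αβ-dependent. -/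
theorem stmt_5 {Ω : Type*} [MeasureSpace Ω] [IsProbabilityMeasure (ℙ : Measure Ω)]
    {d' d'' N : ℕ} (A : Set (Fin d' → ℝ)) (B : Set (Fin d'' → ℝ))
    (hA : MeasurableSet A) (hB : MeasurableSet B)
    (hA' : A ⊆ Set.univ.pi fun _ => Set.Ico (0 : ℝ) 1)
    (hB' : B ⊆ Set.univ.pi fun _ => Set.Ico (0 : ℝ) 1)
    (x : Fin N → Ω → (Fin d' → ℝ)) (y : Fin N → Ω → (Fin d'' → ℝ))
    (hxm : ∀ i, Measurable (x i)) (hym : ∀ i, Measurable (y i))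
    (α β : ℝ≥0∞) (hα : 1 ≤ α) (hβ : 1 ≤ β)
    (hindep : IndepFun (fun ω i => x i ω) (fun ω i => y i ω) ℙ)
    (hx : ∀ u : Finset (Fin N),
      ℙ (⋂ j ∈ u, {ω | x j ω ∈ A}) ≤ α * ∏ j ∈ u, ℙ {ω | x j ω ∈ A})
    (hy : ∀ u : Finset (Fin N),
      ℙ (⋂ j ∈ u, {ω | y j ω ∈ B}) ≤ β * ∏ j ∈ u, ℙ {ω | y j ω ∈ B}) :
    ∀ u : Finset (Fin N),
      ℙ (⋂ j ∈ u, {ω | x j ω ∈ A ∧ y j ω ∈ B}) ≤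
        α * β * ∏ j ∈ u, ℙ {ω | x j ω ∈ A ∧ y j ω ∈ B} := by
  -- key: for any finset v, the x-event and y-event are independent
  have key : ∀ v : Finset (Fin N),
      ℙ ((⋂ j ∈ v, {ω | x j ω ∈ A}) ∩ (⋂ j ∈ v, {ω | y j ω ∈ B}))
        = ℙ (⋂ j ∈ v, {ω | x j ω ∈ A}) * ℙ (⋂ j ∈ v, {ω | y j ω ∈ B}) := by
    intro v
    have hSA : MeasurableSet (⋂ j ∈ v, (fun f : Fin N → Fin d' → ℝ => f j) ⁻¹' A) :=
      MeasurableSet.biInter v.countable_toSet fun j _ => (measurable_pi_apply j) hA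
    have hSB : MeasurableSet (⋂ j ∈ v, (fun f : Fin N → Fin d'' → ℝ => f j) ⁻¹' B) :=
      MeasurableSet.biInter v.countable_toSet fun j _ => (measurable_pi_apply j) hB
    have h := hindep.measure_inter_preimage_eq_mul _ _ hSA hSB
    have e1 : (fun ω i => x i ω) ⁻¹' (⋂ j ∈ v, (fun f : Fin N → Fin d' → ℝ => f j) ⁻¹' A)
        = ⋂ j ∈ v, {ω | x j ω ∈ A} := by
      ext ω; simp
    have e2 : (fun ω i => y i ω) ⁻¹' (⋂ j ∈ v, (fun f : Fin N → Fin d'' → ℝ => f j) ⁻¹' B)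
        = ⋂ j ∈ v, {ω | y j ω ∈ B} := by
      ext ω; simp
    rwa [e1, e2] at h
  intro u
  have hsplit : (⋂ j ∈ u, {ω | x j ω ∈ A ∧ y j ω ∈ B})
      = (⋂ j ∈ u, {ω | x j ω ∈ A}) ∩ (⋂ j ∈ u, {ω | y j ω ∈ B}) := by
    ext ω; simp [Set.mem_iInter, forall_and]
  have hsingle : ∀ j : Fin N, ℙ {ω | x j ω ∈ A ∧ y j ω ∈ B}
      = ℙ {ω | x j ω ∈ A} * ℙ {ω | y j ω ∈ B} := by
    intro j
    have := key {j}
    simpa [Set.setOf_and] using this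
  calc ℙ (⋂ j ∈ u, {ω | x j ω ∈ A ∧ y j ω ∈ B})
      = ℙ (⋂ j ∈ u, {ω | x j ω ∈ A}) * ℙ (⋂ j ∈ u, {ω | y j ω ∈ B}) := by
        rw [hsplit, key u]
    _ ≤ (α * ∏ j ∈ u, ℙ {ω | x j ω ∈ A}) * (β * ∏ j ∈ u, ℙ {ω | y j ω ∈ B}) :=
        mul_le_mul' (hx u) (hy u)
    _ = α * β * ∏ j ∈ u, ℙ {ω | x j ω ∈ A ∧ y j ω ∈ B} := by
        rw [Finset.prod_congr rfl fun j _ => hsingle j, Finset.prod_mul_distrib]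
        ring
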